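/- Assume the Markov restrictions of model M hold. Define the sequences z(n) = p^n, Y(n) = (P_b^n)₁₁·Y_I + (P_b^n)₁₂·Y_M (a vector in ℝ^N), and K(n) = (P_b^n)₁₁·k_I + (P_b^n)₁₂·k_M. Then these sequences satisfy the equations of model A after a unit shock: for every n ≥ 0, A₀ *ᵥ Y(n) = A *ᵥ Y(n+1) + K(n)·B + z(n)·C; moreover K(0) = D₀ ⬝ Y(0) + e, and for every n ≥ 1, K(n) = ρ·K(n−1) + D₀ ⬝ Y(n) + e·z(n). -/
import Mathlib


open Matrix

noncomputable def Pb (p q : ℝ) : Matrix (Fin 3) (Fin 3) ℝ :=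
  !![p, 1 - p, 0; 0, q, 1 - q; 0, 0, 1]

lemma Pb_pow_00 (p q : ℝ) (n : ℕ) : (Pb p q ^ n) 0 0 = p ^ n := by
  induction n with
  | zero => simp
  | succ n ih =>
    rw [pow_succ, pow_succ]
    simp only [Pb] at ih ⊢
    simp [Matrix.mul_apply, Fin.sum_univ_three, Matrix.vecHead, Matrix.vecTail, ih]

lemma Pb_pow_01 (p q : ℝ) (n : ℕ) :
    (Pb p q ^ (n + 1)) 0 1 = p ^ n * (1 - p) + (Pb p q ^ n) 0 1 * q := by
  have h00 := Pb_pow_00 p q n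
  rw [pow_succ]
  simp only [Pb] at h00 ⊢
  simp [Matrix.mul_apply, Fin.sum_univ_three, Matrix.vecHead, Matrix.vecTail, h00]

theorem stmt_9 {N : ℕ} (hN : 1 ≤ N)
    (A₀ A : Matrix (Fin N) (Fin N) ℝ) (B C D₀ Y_I Y_M : Fin N → ℝ)
    (e ρ p q k_I k_M : ℝ) (hp : p ≠ 1)
    (h1 : A₀ *ᵥ Y_I = p • (A *ᵥ Y_I) + (1 - p) • (A *ᵥ Y_M) + k_I • B + C)
    (h2 : A₀ *ᵥ Y_M = q • (A *ᵥ Y_M) + k_M • B)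
    (h3 : k_I = D₀ ⬝ᵥ Y_I + e)
    (h4 : k_M = (ρ / (1 - p)) * k_I + D₀ ⬝ᵥ Y_M)
    (h5 : k_M = q * k_I / (1 - p))
    (z : ℕ → ℝ) (hz : ∀ n, z n = p ^ n)
    (Y : ℕ → Fin N → ℝ)
    (hY : ∀ n, Y n = (Pb p q ^ n) 0 0 • Y_I + (Pb p q ^ n) 0 1 • Y_M)
    (K : ℕ → ℝ)
    (hK : ∀ n, K n = (Pb p q ^ n) 0 0 * k_I + (Pb p q ^ n) 0 1 * k_M) :
    (∀ n, A₀ *ᵥ Y n = A *ᵥ Y (n + 1) + K n • B + z n • C) ∧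
      K 0 = D₀ ⬝ᵥ Y 0 + e ∧
      ∀ n, 1 ≤ n → K n = ρ * K (n - 1) + D₀ ⬝ᵥ Y n + e * z n := by
  have hp' : (1 : ℝ) - p ≠ 0 := sub_ne_zero.mpr (Ne.symm hp)
  have h5' : (1 - p) * k_M = q * k_I := by
    field_simp at h5; linarith [h5]
  have hDYM : D₀ ⬝ᵥ Y_M = k_M - ρ / (1 - p) * k_I := by linarith [h4]
  have hDYI : D₀ ⬝ᵥ Y_I = k_I - e := by linarith [h3]
  refine ⟨?_, ?_, ?_⟩
  · intro n
    have key : ρ = ρ := rfl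
    rw [hY n, hY (n + 1), hK n, hz n, Pb_pow_00, Pb_pow_00, Pb_pow_01]
    set b := (Pb p q ^ n) 0 1 with hb
    rw [Matrix.mulVec_add, Matrix.mulVec_add, Matrix.mulVec_smul,
      Matrix.mulVec_smul, Matrix.mulVec_smul, Matrix.mulVec_smul, h1, h2]
    ext i
    simp only [Pi.add_apply, Pi.smul_apply, smul_eq_mul]
    ring
  · rw [hK 0, hY 0]
    simp [dotProduct_add, dotProduct_smul, hDYI]
  · intro n hn
    obtain ⟨m, rfl⟩ := Nat.exists_eq_add_of_le hn
    simp only [Nat.add_sub_cancel_left] at *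
    rw [hK (1 + m), hK m, hY (1 + m), hz (1 + m), add_comm 1 m,
      Pb_pow_00, Pb_pow_00, Pb_pow_01]
    set b := (Pb p q ^ m) 0 1 with hb
    simp only [dotProduct_add, dotProduct_smul, smul_eq_mul, hDYI, hDYM]
    have hq : q * k_I = (1 - p) * k_M := h5'.symm
    field_simp
    linear_combination (-(b * ρ)) * h5'
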